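/- Dual problem structure: let g : ℝᵐ → ℝ be real-valued and c-strongly convex, A an n×m matrix (m ≤ n), b in the range of A. Then the primal problem min{g(y) : Ay = b} has a unique solution ȳ, and the dual objective f(x) = g*(Aᵀx) − ⟨b, x⟩ is convex differentiable with (‖A‖²/c)-Lipschitz gradient, and Argmin f = {x : ∇g*(Aᵀx) = ȳ} = {x : Aᵀx ∈ ∂g(ȳ)}. -/

import Mathlib

open scoped RealInnerProductSpace

/-- The (convex) subdifferential of a real-valued function on a real inner product
space. -/
def subdiff' {E : Type*} [NormedAddCommGroup E] [InnerProductSpace ℝ E]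
    (f : E → ℝ) (x : E) : Set E :=
  {v | ∀ z, f x + ⟪v, z - x⟫ ≤ f z}

section aux

open Set Metric Filter

variable {E : Type*} [NormedAddCommGroup E] [InnerProductSpace ℝ E] [FiniteDimensional ℝ E]

lemma sc_continuous {c : ℝ} (hc : 0 < c) {φ : E → ℝ} (hφ : StrongConvexOn Set.univ c φ) :
    Continuous φ := by
  have h := (hφ.convexOn fun r => by positivity).continuousOn isOpen_univ
  exact continuousOn_univ.mp h

lemma sc_exists_min {c : ℝ} (hc : 0 < c) {φ : E → ℝ} (hφ : StrongConvexOn Set.univ c φ)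
    {K : Set E} (hKc : IsClosed K) {y0 : E} (hy0 : y0 ∈ K) :
    ∃ u ∈ K, ∀ v ∈ K, φ u ≤ φ v := by
  have hcont : Continuous φ := sc_continuous hc hφ
  obtain ⟨z0, hz0B, hz0min⟩ := (isCompact_closedBall y0 1).exists_isMinOn
    (nonempty_closedBall.2 zero_le_one) hcont.continuousOn
  set m := φ z0 with hm
  have key : ∀ u : E, 1 ≤ ‖u - y0‖ →
      φ y0 + ‖u - y0‖ * ((m - φ y0) + c / 2 * (‖u - y0‖ - 1)) ≤ φ u := by
    intro u hu
    set R := ‖u - y0‖ with hRdef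
    have hR0 : (0 : ℝ) < R := lt_of_lt_of_le one_pos hu
    have hRne : R ≠ 0 := hR0.ne'
    set t := R⁻¹ with htdef
    have ht0 : 0 < t := inv_pos.2 hR0
    have ht1 : t ≤ 1 := by
      rw [htdef]
      exact inv_le_one_of_one_le₀ hu
    have hzsub : t • u + (1 - t) • y0 - y0 = t • (u - y0) := by
      rw [smul_sub, sub_smul, one_smul]; abel
    have hz : (t • u + (1 - t) • y0) ∈ closedBall y0 1 := by
      rw [mem_closedBall, dist_eq_norm, hzsub, norm_smul, Real.norm_eq_abs, abs_of_pos ht0,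
        htdef, ← hRdef, inv_mul_cancel₀ hRne]
    have hmz : m ≤ φ (t • u + (1 - t) • y0) := hz0min hz
    have hsc := hφ.2 (mem_univ u) (mem_univ y0) (show (0:ℝ) ≤ t from ht0.le)
      (show (0:ℝ) ≤ 1 - t by linarith) (show t + (1 - t) = 1 by ring)
    simp only [smul_eq_mul] at hsc
    have hRt : R * t = 1 := mul_inv_cancel₀ hRne
    have hexp : R * (t * φ u + (1 - t) * φ y0 - t * (1 - t) * (c / 2 * R ^ 2))
        = φ u + (R - 1) * φ y0 - c / 2 * (R ^ 2 - R) := by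
      rw [htdef]
      field_simp
    have hchain : R * m ≤ R * (t * φ u + (1 - t) * φ y0 - t * (1 - t) * (c / 2 * R ^ 2)) :=
      mul_le_mul_of_nonneg_left (hmz.trans hsc) hR0.le
    rw [hexp] at hchain
    nlinarith [hchain]
  set R0 : ℝ := max 1 (1 + 2 * (φ y0 - m + 1) / c) with hR0def
  have hcoc : ∀ᶠ x in cocompact E ⊓ 𝓟 K, φ y0 ≤ φ x := by
    rw [eventually_inf_principal]
    refine hasBasis_cocompact.eventually_iff.2
      ⟨closedBall y0 R0, isCompact_closedBall _ _, fun u hu _ => ?_⟩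
    have hu' : R0 < ‖u - y0‖ := by
      simpa [mem_closedBall, dist_eq_norm, not_le] using hu
    have h1 : (1 : ℝ) ≤ ‖u - y0‖ := le_trans (le_max_left _ _) hu'.le
    have h2 : 1 + 2 * (φ y0 - m + 1) / c ≤ ‖u - y0‖ := le_trans (le_max_right _ _) hu'.le
    have hkey := key u h1
    have hcc : c / 2 * (2 * (φ y0 - m + 1) / c) = φ y0 - m + 1 := by field_simp
    have hbr : 1 ≤ (m - φ y0) + c / 2 * (‖u - y0‖ - 1) := by
      have h3 : c / 2 * (2 * (φ y0 - m + 1) / c) ≤ c / 2 * (‖u - y0‖ - 1) :=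
        mul_le_mul_of_nonneg_left (by linarith) (by linarith)
      rw [hcc] at h3
      linarith
    nlinarith [mul_le_mul_of_nonneg_left hbr (by linarith : (0:ℝ) ≤ ‖u - y0‖)]
  obtain ⟨u, huK, humin⟩ := hcont.continuousOn.exists_isMinOn' hKc hy0 hcoc
  exact ⟨u, huK, fun v hv => isMinOn_iff.mp humin v hv⟩

lemma sc_min_unique {c : ℝ} (hc : 0 < c) {φ : E → ℝ} (hφ : StrongConvexOn Set.univ c φ)
    {K : Set E} (hK : Convex ℝ K) {u v : E} (hu : u ∈ K) (hv : v ∈ K)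
    (hmu : ∀ w ∈ K, φ u ≤ φ w) (hmv : ∀ w ∈ K, φ v ≤ φ w) : u = v := by
  by_contra hne
  have h8 : (0 : ℝ) < ‖u - v‖ := norm_sub_pos_iff.2 hne
  have hmid := hφ.2 (mem_univ u) (mem_univ v) (show (0:ℝ) ≤ 1/2 by norm_num)
    (show (0:ℝ) ≤ 1/2 by norm_num) (show (1/2:ℝ) + 1/2 = 1 by norm_num)
  simp only [smul_eq_mul] at hmid
  have hmem : (1/2 : ℝ) • u + (1/2 : ℝ) • v ∈ K := hK hu hv (by norm_num) (by norm_num) (by norm_num)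
  have h1 := hmu _ hmem
  have h2 := hmv u hu
  have h3 := hmu v hv
  nlinarith [mul_pos hc (mul_pos h8 h8)]

lemma sc_growth {c : ℝ} (hc : 0 < c) {φ : E → ℝ} (hφ : StrongConvexOn Set.univ c φ)
    {u0 : E} (hmin : ∀ v, φ u0 ≤ φ v) (u : E) : φ u0 + c / 2 * ‖u - u0‖ ^ 2 ≤ φ u := by
  set Q := c / 2 * ‖u - u0‖ ^ 2 with hQdef
  have hQ0 : 0 ≤ Q := by positivity
  refine le_of_forall_pos_le_add fun ε hε => ?_
  set t := min (1/2 : ℝ) (ε / (Q + 1)) with htdef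
  have ht0 : 0 < t := lt_min (by norm_num) (div_pos hε (by linarith))
  have ht1 : t ≤ 1 := le_trans (min_le_left _ _) (by norm_num)
  have hsc := hφ.2 (mem_univ u) (mem_univ u0) (show (0:ℝ) ≤ t from ht0.le)
    (show (0:ℝ) ≤ 1 - t by linarith) (show t + (1 - t) = 1 by ring)
  simp only [smul_eq_mul] at hsc
  rw [← hQdef] at hsc
  have hlow : φ u0 ≤ φ (t • u + (1 - t) • u0) := hmin _
  have htQ : t * Q ≤ ε := by
    have hle : t ≤ ε / (Q + 1) := min_le_right _ _
    calc t * Q ≤ ε / (Q + 1) * Q := mul_le_mul_of_nonneg_right hle hQ0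
      _ ≤ ε := by
          rw [div_mul_eq_mul_div, div_le_iff₀ (by linarith)]
          nlinarith
  have hcomb : t * (φ u0 + (1 - t) * Q) ≤ t * φ u := by nlinarith
  have hdiv := (mul_le_mul_iff_right₀ ht0).mp hcomb
  nlinarith

end aux

set_option maxHeartbeats 2000000 in
/-- Dual problem structure. For `g : ℝᵐ → ℝ` real-valued `c`-strongly
convex, `A : ℝᵐ → ℝⁿ` linear (`m ≤ n`), `b ∈ range A`, the primal problem
`min {g(y) : Ay = b}` has a unique solution `ȳ`; the dual objective
`f(x) = g*(Aᵀx) − ⟨b, x⟩` is convex and differentiable with `(‖A‖²/c)`-Lipschitz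
gradient; and `Argmin f = {x : ∇g*(Aᵀx) = ȳ} = {x : Aᵀx ∈ ∂g(ȳ)}`. -/
theorem stmt19 {mdim n : ℕ} (hmn : mdim ≤ n)
    (g : EuclideanSpace ℝ (Fin mdim) → ℝ)
    (c : ℝ) (hc : 0 < c)
    (hg : StrongConvexOn Set.univ c g)
    (A : EuclideanSpace ℝ (Fin mdim) →L[ℝ] EuclideanSpace ℝ (Fin n))
    (b : EuclideanSpace ℝ (Fin n)) (hb : b ∈ Set.range A)
    (gs : EuclideanSpace ℝ (Fin mdim) → ℝ)
    (hgs : ∀ y, IsLUB {r | ∃ u, r = ⟪y, u⟫ - g u} (gs y))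
    (fd : EuclideanSpace ℝ (Fin n) → ℝ)
    (hfd : ∀ x, fd x = gs ((ContinuousLinearMap.adjoint A) x) - ⟪b, x⟫) :
    ∃ ybar : EuclideanSpace ℝ (Fin mdim),
      (A ybar = b ∧ (∀ y, A y = b → g ybar ≤ g y)) ∧
      (∀ y', A y' = b → (∀ y, A y = b → g y' ≤ g y) → y' = ybar) ∧
      ConvexOn ℝ Set.univ fd ∧
      (∃ fd' : EuclideanSpace ℝ (Fin n) → EuclideanSpace ℝ (Fin n),
        (∀ x, HasGradientAt fd (fd' x) x) ∧
        ∀ x y, ‖fd' x - fd' y‖ ≤ (‖A‖^2 / c) * ‖x - y‖) ∧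
      (∃ Dgs : EuclideanSpace ℝ (Fin mdim) → EuclideanSpace ℝ (Fin mdim),
        (∀ y, HasGradientAt gs (Dgs y) y) ∧
        {x | ∀ y, fd x ≤ fd y} = {x | Dgs ((ContinuousLinearMap.adjoint A) x) = ybar} ∧
        {x | ∀ y, fd x ≤ fd y}
          = {x | (ContinuousLinearMap.adjoint A) x ∈ subdiff' g ybar}) := by
  classical
  obtain ⟨w, hw⟩ := hb
  set At := ContinuousLinearMap.adjoint A with hAt
  -- strong convexity of linearly perturbed functions
  have hpert : ∀ y : EuclideanSpace ℝ (Fin mdim),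
      StrongConvexOn Set.univ c (fun u => g u - ⟪y, u⟫) := by
    intro y
    refine ⟨convex_univ, fun u _ v _ a b' ha hb' hab => ?_⟩
    have h1 := hg.2 (Set.mem_univ u) (Set.mem_univ v) ha hb' hab
    have h2 : ⟪y, a • u + b' • v⟫ = a * ⟪y, u⟫ + b' * ⟪y, v⟫ := by
      rw [inner_add_right, real_inner_smul_right, real_inner_smul_right]
    simp only [smul_eq_mul] at h1 ⊢
    rw [h2]
    linarith
  -- unique minimizers of the perturbed functions
  have hexu : ∀ y : EuclideanSpace ℝ (Fin mdim), ∃ u,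
      (∀ v, g u - ⟪y, u⟫ ≤ g v - ⟪y, v⟫) ∧
      ∀ u', (∀ v, g u' - ⟪y, u'⟫ ≤ g v - ⟪y, v⟫) → u' = u := by
    intro y
    obtain ⟨u, -, hu⟩ := sc_exists_min hc (hpert y) isClosed_univ (Set.mem_univ (0 : _))
    refine ⟨u, fun v => hu v (Set.mem_univ v), fun u' hu' => ?_⟩
    exact sc_min_unique hc (hpert y) convex_univ (Set.mem_univ u') (Set.mem_univ u)
      (fun z _ => hu' z) (fun z _ => hu z (Set.mem_univ z))
  choose Dgs hDmin hDuniq using hexu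
  -- the conjugate value formula
  have hgs_eq : ∀ y, gs y = ⟪y, Dgs y⟫ - g (Dgs y) := by
    intro y
    refine (hgs y).unique (IsGreatest.isLUB ⟨⟨Dgs y, rfl⟩, fun r hr => ?_⟩)
    obtain ⟨u, rfl⟩ := hr
    have := hDmin y u
    linarith
  have hgs_ge : ∀ y u, ⟪y, u⟫ - g u ≤ gs y := fun y u => (hgs y).1 ⟨u, rfl⟩
  -- Lipschitz property of Dgs
  have hDlip : ∀ y₁ y₂, ‖Dgs y₁ - Dgs y₂‖ ≤ c⁻¹ * ‖y₁ - y₂‖ := by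
    intro y₁ y₂
    have h1 : g (Dgs y₁) - ⟪y₁, Dgs y₁⟫ + c / 2 * ‖Dgs y₂ - Dgs y₁‖ ^ 2 ≤
        g (Dgs y₂) - ⟪y₁, Dgs y₂⟫ := sc_growth hc (hpert y₁) (hDmin y₁) (Dgs y₂)
    have h2 : g (Dgs y₂) - ⟪y₂, Dgs y₂⟫ + c / 2 * ‖Dgs y₁ - Dgs y₂‖ ^ 2 ≤
        g (Dgs y₁) - ⟪y₂, Dgs y₁⟫ := sc_growth hc (hpert y₂) (hDmin y₂) (Dgs y₁)
    have hinner : ⟪y₁ - y₂, Dgs y₁ - Dgs y₂⟫ ≤ ‖y₁ - y₂‖ * ‖Dgs y₁ - Dgs y₂‖ :=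
      real_inner_le_norm _ _
    have hexp : ⟪y₁ - y₂, Dgs y₁ - Dgs y₂⟫
        = ⟪y₁, Dgs y₁⟫ - ⟪y₁, Dgs y₂⟫ - ⟪y₂, Dgs y₁⟫ + ⟪y₂, Dgs y₂⟫ := by
      rw [inner_sub_left, inner_sub_right, inner_sub_right]; ring
    have hnorm : ‖Dgs y₂ - Dgs y₁‖ = ‖Dgs y₁ - Dgs y₂‖ := norm_sub_rev _ _
    rw [hnorm] at h1
    rw [hexp] at hinner
    have hq : c * ‖Dgs y₁ - Dgs y₂‖ ^ 2 ≤ ‖y₁ - y₂‖ * ‖Dgs y₁ - Dgs y₂‖ := by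
      linarith [h1, h2, hinner]
    rcases eq_or_lt_of_le (norm_nonneg (Dgs y₁ - Dgs y₂)) with h0 | h0
    · rw [← h0]; positivity
    · rw [pow_two, ← mul_assoc] at hq
      have hq' := hq
      have hcd : c * ‖Dgs y₁ - Dgs y₂‖ ≤ ‖y₁ - y₂‖ := le_of_mul_le_mul_right hq' h0
      have := mul_le_mul_of_nonneg_left hcd (inv_nonneg.2 hc.le)
      rwa [inv_mul_cancel_left₀ hc.ne'] at this
  -- quadratic error bound for the conjugate
  have hsq : ∀ y y', |gs y' - gs y - ⟪Dgs y, y' - y⟫| ≤ c⁻¹ * ‖y' - y‖ ^ 2 := by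
    intro y y'
    have hcomm : ⟪Dgs y, y' - y⟫ = ⟪y', Dgs y⟫ - ⟪y, Dgs y⟫ := by
      rw [real_inner_comm, inner_sub_left]
    have hub : gs y' - gs y - ⟪Dgs y, y' - y⟫ ≤ c⁻¹ * ‖y' - y‖ ^ 2 := by
      have e1 : gs y' = ⟪y', Dgs y'⟫ - g (Dgs y') := hgs_eq y'
      have e2 : ⟪y, Dgs y'⟫ - g (Dgs y') ≤ gs y := hgs_ge y _
      have hB : ⟪y' - y, Dgs y' - Dgs y⟫ ≤ ‖y' - y‖ * ‖Dgs y' - Dgs y‖ :=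
        real_inner_le_norm _ _
      have hC : ‖Dgs y' - Dgs y‖ ≤ c⁻¹ * ‖y' - y‖ := hDlip y' y
      have hsplit : ⟪y' - y, Dgs y' - Dgs y⟫
          = ⟪y', Dgs y'⟫ - ⟪y, Dgs y'⟫ - ⟪y', Dgs y⟫ + ⟪y, Dgs y⟫ := by
        rw [inner_sub_left, inner_sub_right, inner_sub_right]; ring
      have hD : ‖y' - y‖ * ‖Dgs y' - Dgs y‖ ≤ ‖y' - y‖ * (c⁻¹ * ‖y' - y‖) :=
        mul_le_mul_of_nonneg_left hC (norm_nonneg _)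
      have hD' : ‖y' - y‖ * (c⁻¹ * ‖y' - y‖) = c⁻¹ * ‖y' - y‖ ^ 2 := by ring
      linarith [hB, hD]
    have hlb : 0 ≤ gs y' - gs y - ⟪Dgs y, y' - y⟫ := by
      have e1 : gs y = ⟪y, Dgs y⟫ - g (Dgs y) := hgs_eq y
      have e2 : ⟪y', Dgs y⟫ - g (Dgs y) ≤ gs y' := hgs_ge y' _
      linarith
    have hpos : (0:ℝ) ≤ c⁻¹ * ‖y' - y‖ ^ 2 := by positivity
    rw [abs_le]
    exact ⟨by linarith, hub⟩
  -- `gs` is differentiable with gradient `Dgs`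
  have hgrad_gs : ∀ y, HasGradientAt gs (Dgs y) y := by
    intro y
    rw [hasGradientAt_iff_isLittleO, Asymptotics.isLittleO_iff]
    intro ε hε
    filter_upwards [Metric.ball_mem_nhds y (show (0:ℝ) < c * ε by positivity)] with y' hy'
    have h1 := hsq y y'
    have h2 : ‖y' - y‖ < c * ε := by rwa [Metric.mem_ball, dist_eq_norm] at hy'
    rw [Real.norm_eq_abs]
    refine h1.trans ?_
    have hre : c⁻¹ * ‖y' - y‖ ^ 2 = (c⁻¹ * ‖y' - y‖) * ‖y' - y‖ := by ring
    rw [hre]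
    have : c⁻¹ * ‖y' - y‖ ≤ ε := by
      have := mul_le_mul_of_nonneg_left h2.le (inv_nonneg.2 hc.le)
      rwa [inv_mul_cancel_left₀ hc.ne'] at this
    calc (c⁻¹ * ‖y' - y‖) * ‖y' - y‖ ≤ ε * ‖y' - y‖ :=
          mul_le_mul_of_nonneg_right this (norm_nonneg _)
      _ = ε * ‖(fun x' => x' - y) y'‖ := by norm_num
  -- the primal problem
  have hKclosed : IsClosed {y : EuclideanSpace ℝ (Fin mdim) | A y = b} :=
    isClosed_eq A.continuous continuous_const
  have hKconv : Convex ℝ {y : EuclideanSpace ℝ (Fin mdim) | A y = b} := by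
    intro p hp q hq a b' ha hb' hab
    simp only [Set.mem_setOf_eq] at hp hq ⊢
    rw [map_add, map_smul, map_smul, hp, hq, ← add_smul, hab, one_smul]
  obtain ⟨ybar, hybarK, hybarmin⟩ := sc_exists_min hc hg hKclosed (show w ∈ _ from hw)
  have hprimal_min : ∀ y, A y = b → g ybar ≤ g y := fun y hy => hybarmin y hy
  have huniqP : ∀ y', A y' = b → (∀ y, A y = b → g y' ≤ g y) → y' = ybar := by
    intro y' hy' hmin'
    exact sc_min_unique hc hg hKconv hy' hybarK (fun z hz => hmin' z hz)
      (fun z hz => hybarmin z hz)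
  -- convexity of gs and fd
  have hgs_convex : ∀ (p q : EuclideanSpace ℝ (Fin mdim)) (a b' : ℝ), 0 ≤ a → 0 ≤ b' →
      a + b' = 1 → gs (a • p + b' • q) ≤ a * gs p + b' * gs q := by
    intro p q a b' ha hb' hab
    refine (hgs _).2 fun r hr => ?_
    obtain ⟨u, rfl⟩ := hr
    have h1 : ⟪p, u⟫ - g u ≤ gs p := hgs_ge p u
    have h2 : ⟪q, u⟫ - g u ≤ gs q := hgs_ge q u
    have h3 : ⟪a • p + b' • q, u⟫ = a * ⟪p, u⟫ + b' * ⟪q, u⟫ := by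
      rw [inner_add_left, real_inner_smul_left, real_inner_smul_left]
    have l1 : a * (⟪p, u⟫ - g u) ≤ a * gs p := mul_le_mul_of_nonneg_left h1 ha
    have l2 : b' * (⟪q, u⟫ - g u) ≤ b' * gs q := mul_le_mul_of_nonneg_left h2 hb'
    have l3 : a * (⟪p, u⟫ - g u) + b' * (⟪q, u⟫ - g u) = ⟪a • p + b' • q, u⟫ - g u := by
      rw [h3]; linear_combination (-(g u)) * hab
    linarith [l1, l2, l3]
  have hfd_convex : ConvexOn ℝ Set.univ fd := by
    refine ⟨convex_univ, fun x _ y _ a b' ha hb' hab => ?_⟩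
    simp only [smul_eq_mul, hfd]
    have hA : At (a • x + b' • y) = a • At x + b' • At y := by
      rw [map_add, map_smul, map_smul]
    rw [hA, inner_add_right, real_inner_smul_right, real_inner_smul_right]
    have := hgs_convex (At x) (At y) a b' ha hb' hab
    linarith
  -- gradient of the dual objective
  set fd' : EuclideanSpace ℝ (Fin n) → EuclideanSpace ℝ (Fin n) :=
    fun x => A (Dgs (At x)) - b with hfd'def
  have hgradfd : ∀ x, HasGradientAt fd (fd' x) x := by
    intro x
    rw [hasGradientAt_iff_hasFDerivAt]
    have h1 : HasFDerivAt gs (InnerProductSpace.toDual ℝ _ (Dgs (At x))) (At x) :=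
      hasGradientAt_iff_hasFDerivAt.mp (hgrad_gs _)
    have h2 : HasFDerivAt (fun z => gs (At z))
        ((InnerProductSpace.toDual ℝ _ (Dgs (At x))).comp At) x :=
      h1.comp x At.hasFDerivAt
    have h3 : HasFDerivAt (fun z : EuclideanSpace ℝ (Fin n) => ⟪b, z⟫) (innerSL ℝ b) x :=
      (innerSL ℝ b).hasFDerivAt
    have h4 := h2.sub h3
    have h5 : HasFDerivAt fd
        ((InnerProductSpace.toDual ℝ _ (Dgs (At x))).comp At - innerSL ℝ b) x :=
      h4.congr_of_eventuallyEq (Filter.Eventually.of_forall fun z => hfd z)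
    have hceq : InnerProductSpace.toDual ℝ _ (fd' x)
        = (InnerProductSpace.toDual ℝ _ (Dgs (At x))).comp At - innerSL ℝ b := by
      ext v
      simp only [InnerProductSpace.toDual_apply_apply, ContinuousLinearMap.coe_sub',
        Pi.sub_apply, ContinuousLinearMap.coe_comp', Function.comp_apply,
        innerSL_apply_apply, hfd'def]
      rw [inner_sub_left, hAt, ContinuousLinearMap.adjoint_inner_right]
    rw [hceq]
    exact h5
  -- Lipschitz bound for the dual gradient
  have hnormadj : ‖At‖ = ‖A‖ := by rw [hAt]; exact ContinuousLinearMap.adjoint.norm_map A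
  have hlipfd : ∀ x y, ‖fd' x - fd' y‖ ≤ ‖A‖ ^ 2 / c * ‖x - y‖ := by
    intro x y
    have h1 : fd' x - fd' y = A (Dgs (At x) - Dgs (At y)) := by
      rw [hfd'def]
      simp only [map_sub]
      abel
    rw [h1]
    calc ‖A (Dgs (At x) - Dgs (At y))‖ ≤ ‖A‖ * ‖Dgs (At x) - Dgs (At y)‖ := A.le_opNorm _
      _ ≤ ‖A‖ * (c⁻¹ * ‖At x - At y‖) :=
          mul_le_mul_of_nonneg_left (hDlip _ _) (norm_nonneg _)
      _ = ‖A‖ * c⁻¹ * ‖At (x - y)‖ := by rw [map_sub]; ring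
      _ ≤ ‖A‖ * c⁻¹ * (‖At‖ * ‖x - y‖) := by
          refine mul_le_mul_of_nonneg_left (At.le_opNorm _) ?_
          positivity
      _ = ‖A‖ ^ 2 / c * ‖x - y‖ := by rw [hnormadj]; ring
  -- the value identity along the solution set
  have hinnerb : ∀ x, ⟪b, x⟫ = ⟪At x, ybar⟫ := by
    intro x
    rw [← hybarK, real_inner_comm]
    exact (ContinuousLinearMap.adjoint_inner_left A ybar x).symm
  have hfdx_eq : ∀ x, Dgs (At x) = ybar → fd x = -g ybar := by
    intro x hx
    rw [hfd, hgs_eq (At x), hx, hinnerb x]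
    ring
  have hfd_lb : ∀ x, -g ybar ≤ fd x := by
    intro x
    rw [hfd]
    have h1 : ⟪At x, ybar⟫ - g ybar ≤ gs (At x) := hgs_ge _ _
    have h2 := hinnerb x
    linarith
  have hS12 : {x | ∀ y, fd x ≤ fd y} = {x | Dgs (At x) = ybar} := by
    ext x
    simp only [Set.mem_setOf_eq]
    constructor
    · intro hxmin
      have hloc : IsLocalMin fd x := Filter.Eventually.of_forall hxmin
      have hfder := hasGradientAt_iff_hasFDerivAt.mp (hgradfd x)
      have hzero := hloc.hasFDerivAt_eq_zero hfder
      have hfdx0 : fd' x = 0 := by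
        have h := congrArg (InnerProductSpace.toDual ℝ (EuclideanSpace ℝ (Fin n))).symm hzero
        simpa using h
      have hAu : A (Dgs (At x)) = b := by
        have : A (Dgs (At x)) - b = 0 := hfdx0
        exact sub_eq_zero.mp this
      refine huniqP _ hAu ?_
      intro y hy
      have hm := hDmin (At x) y
      have e1 : ⟪At x, Dgs (At x)⟫ = ⟪x, b⟫ := by
        rw [hAt, ContinuousLinearMap.adjoint_inner_left, hAu]
      have e2 : ⟪At x, y⟫ = ⟪x, b⟫ := by
        rw [hAt, ContinuousLinearMap.adjoint_inner_left, hy]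
      linarith
    · intro hx y
      rw [hfdx_eq x hx]
      exact hfd_lb y
  have hS13 : {x | ∀ y, fd x ≤ fd y} = {x | At x ∈ subdiff' g ybar} := by
    rw [hS12]
    ext x
    simp only [Set.mem_setOf_eq, subdiff', Set.mem_setOf_eq]
    constructor
    · intro hx z
      have h := hDmin (At x) z
      rw [hx] at h
      rw [inner_sub_right]
      linarith
    · intro hsub
      refine (hDuniq (At x) ybar fun v => ?_).symm
      have h := hsub v
      rw [inner_sub_right] at h
      linarith
  exact ⟨ybar, ⟨hybarK, hprimal_min⟩, huniqP, hfd_convex, ⟨fd', hgradfd, hlipfd⟩,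
    ⟨Dgs, hgrad_gs, hS12, hS13⟩⟩
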